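/- Let a, b, u_1, u_2, v_1, v_2 ∈ Θ be homogeneous polynomials of degree N such that the four sums u_i + v_j (1 ≤ i, j ≤ 2) are pairwise distinct. Then (a · (1 − u_1)^{-1}(1 − u_2)^{-1}) ⊙ (b · (1 − v_1)^{-1}(1 − v_2)^{-1}) = a · b · (2 − u_1 − u_2 − v_1 − v_2) · ∏_{i,j=1}^2 (1 − u_i − v_j)^{-1}. -/

import Mathlib

variable {σ : Type*}

/-- Total degree of a monomial. -/
def monDeg (d : σ →₀ ℕ) : ℕ := d.sum fun _ n => n

/-- `Θ`: series whose coefficients vanish in degrees not divisible by `N`. -/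
def InTheta (N : ℕ) (f : MvPowerSeries σ ℚ) : Prop :=
  ∀ d : σ →₀ ℕ, ¬ (N ∣ monDeg d) → MvPowerSeries.coeff d f = 0

/-- `f^(k)`: homogeneous component of total degree `N * k`. -/
noncomputable def homComp (N : ℕ) (f : MvPowerSeries σ ℚ) (k : ℕ) : MvPowerSeries σ ℚ :=
  fun d => if monDeg d = N * k then MvPowerSeries.coeff d f else 0

/-- The operation `⊙`: `f ⊙ g = Σ_{k,ℓ} C(k+ℓ,k) f^(k) g^(ℓ)`, defined coefficientwise
(at a monomial of total degree `m`, only indices `k, ℓ ≤ m` can contribute, for `N ≥ 1`). -/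
noncomputable def odot (N : ℕ) (f g : MvPowerSeries σ ℚ) : MvPowerSeries σ ℚ :=
  fun d => ∑ k ∈ Finset.range (monDeg d + 1), ∑ l ∈ Finset.range (monDeg d + 1),
    ((k + l).choose k : ℚ) * MvPowerSeries.coeff d (homComp N f k * homComp N g l)

/-- The `E`-transform: `E f = Σ_k (q^k / k!) f^(k)`. -/
noncomputable def Etrans (N : ℕ) (f : MvPowerSeries σ ℚ) :
    PowerSeries (MvPowerSeries σ ℚ) :=
  PowerSeries.mk fun k => (k.factorial : ℚ)⁻¹ • homComp N f k

/-- `exp(q·u) = Σ_k (q^k / k!) u^k`. -/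
noncomputable def expQ (u : MvPowerSeries σ ℚ) : PowerSeries (MvPowerSeries σ ℚ) :=
  PowerSeries.mk fun k => (k.factorial : ℚ)⁻¹ • u ^ k

/-- A homogeneous polynomial of degree `N`: finitely many nonzero coefficients,
all in total degree exactly `N`. -/
def IsHomogDeg (N : ℕ) (a : MvPowerSeries σ ℚ) : Prop :=
  {d : σ →₀ ℕ | MvPowerSeries.coeff d a ≠ 0}.Finite ∧
    ∀ d : σ →₀ ℕ, MvPowerSeries.coeff d a ≠ 0 → monDeg d = N

/-- Iterated `⊙`-product of a nonempty list. -/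
noncomputable def odotList (N : ℕ) : List (MvPowerSeries σ ℚ) → MvPowerSeries σ ℚ
  | [] => 1
  | [f] => f
  | f :: g :: rest => odot N f (odotList N (g :: rest))

section CoreGeneric
open Finset PowerSeries

variable {A : Type*} [CommRing A]

lemma unit_cancel {M M' P Q : A} (h : M * M' = 1) (hPQ : P * M = Q * M) : P = Q := by
  calc P = P * (M * M') := by rw [h, mul_one]
    _ = (P * M) * M' := by ring
    _ = (Q * M) * M' := by rw [hPQ]
    _ = Q * (M * M') := by ring
    _ = Q := by rw [h, mul_one]

lemma ps_geom_mul' (u : A) :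
    (PowerSeries.mk fun i => u ^ i) * (1 - PowerSeries.C u * PowerSeries.X) = 1 := by
  apply PowerSeries.ext
  intro n
  rw [mul_sub, mul_one, map_sub]
  have e : (PowerSeries.mk fun i => u ^ i) * (PowerSeries.C u * PowerSeries.X)
      = (PowerSeries.C u * PowerSeries.mk fun i => u ^ i) * PowerSeries.X := by ring
  rw [e]
  match n with
  | 0 =>
      rw [PowerSeries.coeff_zero_mul_X, PowerSeries.coeff_mk, PowerSeries.coeff_one]
      simp
  | m+1 =>
      rw [PowerSeries.coeff_succ_mul_X, PowerSeries.coeff_C_mul, PowerSeries.coeff_mk,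
        PowerSeries.coeff_mk, PowerSeries.coeff_one, pow_succ]
      simp [mul_comm]

lemma diffG (u v : A) :
    (PowerSeries.C u - PowerSeries.C v) * PowerSeries.X *
      ((PowerSeries.mk fun i => u ^ i) * (PowerSeries.mk fun i => v ^ i))
    = (PowerSeries.mk fun i => u ^ i) - (PowerSeries.mk fun i => v ^ i) := by
  have hu := ps_geom_mul' u
  have hv := ps_geom_mul' v
  apply unit_cancel (M := (1 - PowerSeries.C u * PowerSeries.X) * (1 - PowerSeries.C v * PowerSeries.X))
    (M' := (PowerSeries.mk fun i => u ^ i) * (PowerSeries.mk fun i => v ^ i))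
  · calc ((1 - PowerSeries.C u * PowerSeries.X) * (1 - PowerSeries.C v * PowerSeries.X)) *
        ((PowerSeries.mk fun i => u ^ i) * (PowerSeries.mk fun i => v ^ i))
        = ((PowerSeries.mk fun i => u ^ i) * (1 - PowerSeries.C u * PowerSeries.X)) *
          ((PowerSeries.mk fun i => v ^ i) * (1 - PowerSeries.C v * PowerSeries.X)) := by ring
      _ = 1 := by rw [hu, hv, one_mul]
  · calc (PowerSeries.C u - PowerSeries.C v) * PowerSeries.X *
        ((PowerSeries.mk fun i => u ^ i) * (PowerSeries.mk fun i => v ^ i)) *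
        ((1 - PowerSeries.C u * PowerSeries.X) * (1 - PowerSeries.C v * PowerSeries.X))
        = ((PowerSeries.mk fun i => u ^ i) * (1 - PowerSeries.C u * PowerSeries.X)) *
          ((PowerSeries.mk fun i => v ^ i) * (1 - PowerSeries.C v * PowerSeries.X)) *
          ((PowerSeries.C u - PowerSeries.C v) * PowerSeries.X) := by ring
      _ = (PowerSeries.C u - PowerSeries.C v) * PowerSeries.X := by rw [hu, hv]; ring
      _ = ((PowerSeries.mk fun i => u ^ i) - (PowerSeries.mk fun i => v ^ i)) *
          ((1 - PowerSeries.C u * PowerSeries.X) * (1 - PowerSeries.C v * PowerSeries.X)) := by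
          calc (PowerSeries.C u - PowerSeries.C v) * PowerSeries.X
              = ((PowerSeries.mk fun i => u ^ i) * (1 - PowerSeries.C u * PowerSeries.X)) *
                  (1 - PowerSeries.C v * PowerSeries.X)
                - ((PowerSeries.mk fun i => v ^ i) * (1 - PowerSeries.C v * PowerSeries.X)) *
                  (1 - PowerSeries.C u * PowerSeries.X) := by rw [hu, hv]; ring
            _ = _ := by ring

lemma coeff_shiftA (a u v : A) (k : ℕ) :
    (u - v) * (PowerSeries.coeff k (PowerSeries.C a * PowerSeries.X *
      ((PowerSeries.mk fun i => u ^ i) * (PowerSeries.mk fun i => v ^ i))))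
    = a * (u ^ k - v ^ k) := by
  have h : PowerSeries.C (u - v) * (PowerSeries.C a * PowerSeries.X *
      ((PowerSeries.mk fun i => u ^ i) * (PowerSeries.mk fun i => v ^ i)))
      = PowerSeries.C a * ((PowerSeries.mk fun i => u ^ i) - (PowerSeries.mk fun i => v ^ i)) := by
    calc PowerSeries.C (u - v) * (PowerSeries.C a * PowerSeries.X *
        ((PowerSeries.mk fun i => u ^ i) * (PowerSeries.mk fun i => v ^ i)))
        = PowerSeries.C a * ((PowerSeries.C u - PowerSeries.C v) * PowerSeries.X *
            ((PowerSeries.mk fun i => u ^ i) * (PowerSeries.mk fun i => v ^ i))) := by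
          rw [map_sub]; ring
      _ = _ := by rw [diffG]
  calc (u - v) * (PowerSeries.coeff k _)
      = PowerSeries.coeff k (PowerSeries.C (u - v) * (PowerSeries.C a * PowerSeries.X *
          ((PowerSeries.mk fun i => u ^ i) * (PowerSeries.mk fun i => v ^ i)))) := by
        rw [PowerSeries.coeff_C_mul]
    _ = PowerSeries.coeff k (PowerSeries.C a *
          ((PowerSeries.mk fun i => u ^ i) - (PowerSeries.mk fun i => v ^ i))) := by rw [h]
    _ = a * (u ^ k - v ^ k) := by
        rw [PowerSeries.coeff_C_mul, map_sub, PowerSeries.coeff_mk, PowerSeries.coeff_mk]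

end CoreGeneric

section CoreGeneric2
open Finset PowerSeries

variable {A : Type*} [CommRing A]

noncomputable def psG (u : A) : PowerSeries A := PowerSeries.mk fun i => u ^ i

lemma coeff_psG (u : A) (n : ℕ) : PowerSeries.coeff n (psG u) = u ^ n :=
  PowerSeries.coeff_mk _ _

lemma psG_mul (u : A) : psG u * (1 - PowerSeries.C u * PowerSeries.X) = 1 :=
  ps_geom_mul' u

lemma diffG' (u v : A) :
    (PowerSeries.C u - PowerSeries.C v) * PowerSeries.X * (psG u * psG v)
      = psG u - psG v := diffG u v

lemma coeff_shiftA' (a u v : A) (k : ℕ) :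
    (u - v) * (PowerSeries.coeff k (PowerSeries.C a * PowerSeries.X * (psG u * psG v)))
    = a * (u ^ k - v ^ k) := coeff_shiftA a u v k

set_option maxHeartbeats 1000000 in
lemma fourG (u₁ u₂ v₁ v₂ : A) :
    PowerSeries.C ((u₁ - u₂) * (v₁ - v₂)) *
      ((2 - PowerSeries.C (u₁ + u₂ + v₁ + v₂) * PowerSeries.X) * (PowerSeries.X ^ 2 *
        (psG (u₁ + v₁) * psG (u₁ + v₂) * psG (u₂ + v₁) * psG (u₂ + v₂))))
    = psG (u₁ + v₁) - psG (u₁ + v₂) - psG (u₂ + v₁) + psG (u₂ + v₂) := by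
  have h11 := psG_mul (u₁ + v₁)
  have h12 := psG_mul (u₁ + v₂)
  have h21 := psG_mul (u₂ + v₁)
  have h22 := psG_mul (u₂ + v₂)
  apply unit_cancel
    (M := (1 - PowerSeries.C (u₁ + v₁) * PowerSeries.X) * (1 - PowerSeries.C (u₁ + v₂) * PowerSeries.X) *
      (1 - PowerSeries.C (u₂ + v₁) * PowerSeries.X) * (1 - PowerSeries.C (u₂ + v₂) * PowerSeries.X))
    (M' := psG (u₁ + v₁) * psG (u₁ + v₂) * psG (u₂ + v₁) * psG (u₂ + v₂))
  · calc (1 - PowerSeries.C (u₁ + v₁) * PowerSeries.X) * (1 - PowerSeries.C (u₁ + v₂) * PowerSeries.X) *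
      (1 - PowerSeries.C (u₂ + v₁) * PowerSeries.X) * (1 - PowerSeries.C (u₂ + v₂) * PowerSeries.X) *
      (psG (u₁ + v₁) * psG (u₁ + v₂) * psG (u₂ + v₁) * psG (u₂ + v₂))
        = (psG (u₁ + v₁) * (1 - PowerSeries.C (u₁ + v₁) * PowerSeries.X)) *
          ((psG (u₁ + v₂) * (1 - PowerSeries.C (u₁ + v₂) * PowerSeries.X)) *
          ((psG (u₂ + v₁) * (1 - PowerSeries.C (u₂ + v₁) * PowerSeries.X)) *
           (psG (u₂ + v₂) * (1 - PowerSeries.C (u₂ + v₂) * PowerSeries.X)))) := by ring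
      _ = 1 := by rw [h11, h12, h21, h22]; ring
  · calc PowerSeries.C ((u₁ - u₂) * (v₁ - v₂)) *
      ((2 - PowerSeries.C (u₁ + u₂ + v₁ + v₂) * PowerSeries.X) * (PowerSeries.X ^ 2 *
        (psG (u₁ + v₁) * psG (u₁ + v₂) * psG (u₂ + v₁) * psG (u₂ + v₂)))) *
      ((1 - PowerSeries.C (u₁ + v₁) * PowerSeries.X) * (1 - PowerSeries.C (u₁ + v₂) * PowerSeries.X) *
       (1 - PowerSeries.C (u₂ + v₁) * PowerSeries.X) * (1 - PowerSeries.C (u₂ + v₂) * PowerSeries.X))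
        = (PowerSeries.C ((u₁ - u₂) * (v₁ - v₂)) *
            (2 - PowerSeries.C (u₁ + u₂ + v₁ + v₂) * PowerSeries.X) * PowerSeries.X ^ 2) *
          ((psG (u₁ + v₁) * (1 - PowerSeries.C (u₁ + v₁) * PowerSeries.X)) *
          ((psG (u₁ + v₂) * (1 - PowerSeries.C (u₁ + v₂) * PowerSeries.X)) *
          ((psG (u₂ + v₁) * (1 - PowerSeries.C (u₂ + v₁) * PowerSeries.X)) *
           (psG (u₂ + v₂) * (1 - PowerSeries.C (u₂ + v₂) * PowerSeries.X))))) := by ring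
      _ = PowerSeries.C ((u₁ - u₂) * (v₁ - v₂)) *
            (2 - PowerSeries.C (u₁ + u₂ + v₁ + v₂) * PowerSeries.X) * PowerSeries.X ^ 2 := by
          rw [h11, h12, h21, h22]; ring
      _ = (1 - PowerSeries.C (u₁ + v₂) * PowerSeries.X) * (1 - PowerSeries.C (u₂ + v₁) * PowerSeries.X) *
            (1 - PowerSeries.C (u₂ + v₂) * PowerSeries.X)
          - (1 - PowerSeries.C (u₁ + v₁) * PowerSeries.X) * (1 - PowerSeries.C (u₂ + v₁) * PowerSeries.X) *
            (1 - PowerSeries.C (u₂ + v₂) * PowerSeries.X)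
          - (1 - PowerSeries.C (u₁ + v₁) * PowerSeries.X) * (1 - PowerSeries.C (u₁ + v₂) * PowerSeries.X) *
            (1 - PowerSeries.C (u₂ + v₂) * PowerSeries.X)
          + (1 - PowerSeries.C (u₁ + v₁) * PowerSeries.X) * (1 - PowerSeries.C (u₁ + v₂) * PowerSeries.X) *
            (1 - PowerSeries.C (u₂ + v₁) * PowerSeries.X) := by
          simp only [map_add, map_sub, map_mul]
          ring
      _ = (psG (u₁ + v₁) * (1 - PowerSeries.C (u₁ + v₁) * PowerSeries.X)) *
            ((1 - PowerSeries.C (u₁ + v₂) * PowerSeries.X) * (1 - PowerSeries.C (u₂ + v₁) * PowerSeries.X) *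
             (1 - PowerSeries.C (u₂ + v₂) * PowerSeries.X))
          - (psG (u₁ + v₂) * (1 - PowerSeries.C (u₁ + v₂) * PowerSeries.X)) *
            ((1 - PowerSeries.C (u₁ + v₁) * PowerSeries.X) * (1 - PowerSeries.C (u₂ + v₁) * PowerSeries.X) *
             (1 - PowerSeries.C (u₂ + v₂) * PowerSeries.X))
          - (psG (u₂ + v₁) * (1 - PowerSeries.C (u₂ + v₁) * PowerSeries.X)) *
            ((1 - PowerSeries.C (u₁ + v₁) * PowerSeries.X) * (1 - PowerSeries.C (u₁ + v₂) * PowerSeries.X) *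
             (1 - PowerSeries.C (u₂ + v₂) * PowerSeries.X))
          + (psG (u₂ + v₂) * (1 - PowerSeries.C (u₂ + v₂) * PowerSeries.X)) *
            ((1 - PowerSeries.C (u₁ + v₁) * PowerSeries.X) * (1 - PowerSeries.C (u₁ + v₂) * PowerSeries.X) *
             (1 - PowerSeries.C (u₂ + v₁) * PowerSeries.X)) := by
          rw [h11, h12, h21, h22]; ring
      _ = (psG (u₁ + v₁) - psG (u₁ + v₂) - psG (u₂ + v₁) + psG (u₂ + v₂)) *
          ((1 - PowerSeries.C (u₁ + v₁) * PowerSeries.X) * (1 - PowerSeries.C (u₁ + v₂) * PowerSeries.X) *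
           (1 - PowerSeries.C (u₂ + v₁) * PowerSeries.X) * (1 - PowerSeries.C (u₂ + v₂) * PowerSeries.X)) := by
          ring

end CoreGeneric2

section CoreGeneric3
open Finset PowerSeries

variable {A : Type*} [CommRing A]

lemma coeff_R4 (a b u₁ u₂ v₁ v₂ : A) (n : ℕ) :
    ((u₁ - u₂) * (v₁ - v₂)) * PowerSeries.coeff n
      (PowerSeries.C a * PowerSeries.X * (PowerSeries.C b * PowerSeries.X) *
        (2 - PowerSeries.C (u₁ + u₂ + v₁ + v₂) * PowerSeries.X) *
        (psG (u₁ + v₁) * psG (u₁ + v₂) * psG (u₂ + v₁) * psG (u₂ + v₂)))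
    = a * b * ((u₁ + v₁) ^ n - (u₁ + v₂) ^ n - (u₂ + v₁) ^ n + (u₂ + v₂) ^ n) := by
  have h : PowerSeries.C ((u₁ - u₂) * (v₁ - v₂)) *
      (PowerSeries.C a * PowerSeries.X * (PowerSeries.C b * PowerSeries.X) *
        (2 - PowerSeries.C (u₁ + u₂ + v₁ + v₂) * PowerSeries.X) *
        (psG (u₁ + v₁) * psG (u₁ + v₂) * psG (u₂ + v₁) * psG (u₂ + v₂)))
      = PowerSeries.C a * (PowerSeries.C b *
          (psG (u₁ + v₁) - psG (u₁ + v₂) - psG (u₂ + v₁) + psG (u₂ + v₂))) := by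
    calc PowerSeries.C ((u₁ - u₂) * (v₁ - v₂)) *
        (PowerSeries.C a * PowerSeries.X * (PowerSeries.C b * PowerSeries.X) *
          (2 - PowerSeries.C (u₁ + u₂ + v₁ + v₂) * PowerSeries.X) *
          (psG (u₁ + v₁) * psG (u₁ + v₂) * psG (u₂ + v₁) * psG (u₂ + v₂)))
        = PowerSeries.C a * (PowerSeries.C b *
            (PowerSeries.C ((u₁ - u₂) * (v₁ - v₂)) *
              ((2 - PowerSeries.C (u₁ + u₂ + v₁ + v₂) * PowerSeries.X) * (PowerSeries.X ^ 2 *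
                (psG (u₁ + v₁) * psG (u₁ + v₂) * psG (u₂ + v₁) * psG (u₂ + v₂)))))) := by ring
      _ = _ := by rw [fourG]
  rw [← PowerSeries.coeff_C_mul, h, PowerSeries.coeff_C_mul, PowerSeries.coeff_C_mul,
    map_add, map_sub, map_sub, coeff_psG, coeff_psG, coeff_psG, coeff_psG]
  ring

lemma core_generic (a b u₁ u₂ v₁ v₂ : A) (n : ℕ) :
    ((u₁ - u₂) * (v₁ - v₂)) * (∑ k ∈ Finset.range (n + 1), (n.choose k) •
      (PowerSeries.coeff k (PowerSeries.C a * PowerSeries.X * (psG u₁ * psG u₂)) *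
       PowerSeries.coeff (n - k) (PowerSeries.C b * PowerSeries.X * (psG v₁ * psG v₂))))
    = ((u₁ - u₂) * (v₁ - v₂)) * PowerSeries.coeff n
      (PowerSeries.C a * PowerSeries.X * (PowerSeries.C b * PowerSeries.X) *
        (2 - PowerSeries.C (u₁ + u₂ + v₁ + v₂) * PowerSeries.X) *
        (psG (u₁ + v₁) * psG (u₁ + v₂) * psG (u₂ + v₁) * psG (u₂ + v₂))) := by
  rw [coeff_R4]
  simp only [nsmul_eq_mul]
  rw [Finset.mul_sum]
  have hterm : ∀ k ∈ Finset.range (n + 1),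
      (u₁ - u₂) * (v₁ - v₂) * ((n.choose k : A) *
        (PowerSeries.coeff k (PowerSeries.C a * PowerSeries.X * (psG u₁ * psG u₂)) *
         PowerSeries.coeff (n - k) (PowerSeries.C b * PowerSeries.X * (psG v₁ * psG v₂))))
      = a * b * ((n.choose k : A) * (u₁ ^ k * v₁ ^ (n - k)))
        - a * b * ((n.choose k : A) * (u₁ ^ k * v₂ ^ (n - k)))
        - a * b * ((n.choose k : A) * (u₂ ^ k * v₁ ^ (n - k)))
        + a * b * ((n.choose k : A) * (u₂ ^ k * v₂ ^ (n - k))) := by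
    intro k _
    have e1 := coeff_shiftA' a u₁ u₂ k
    have e2 := coeff_shiftA' b v₁ v₂ (n - k)
    calc (u₁ - u₂) * (v₁ - v₂) * ((n.choose k : A) *
        (PowerSeries.coeff k (PowerSeries.C a * PowerSeries.X * (psG u₁ * psG u₂)) *
         PowerSeries.coeff (n - k) (PowerSeries.C b * PowerSeries.X * (psG v₁ * psG v₂))))
        = (n.choose k : A) *
          (((u₁ - u₂) * PowerSeries.coeff k (PowerSeries.C a * PowerSeries.X * (psG u₁ * psG u₂))) *
           ((v₁ - v₂) * PowerSeries.coeff (n - k) (PowerSeries.C b * PowerSeries.X * (psG v₁ * psG v₂)))) := by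
          ring
      _ = (n.choose k : A) * ((a * (u₁ ^ k - u₂ ^ k)) * (b * (v₁ ^ (n - k) - v₂ ^ (n - k)))) := by
          rw [e1, e2]
      _ = _ := by ring
  rw [Finset.sum_congr rfl hterm]
  have e4 : ∀ x y : A, ∑ k ∈ Finset.range (n + 1), (n.choose k : A) * (x ^ k * y ^ (n - k))
      = (x + y) ^ n := by
    intro x y
    rw [add_pow]
    exact Finset.sum_congr rfl fun k _ => by ring
  simp only [Finset.sum_add_distrib, Finset.sum_sub_distrib, ← Finset.mul_sum]
  rw [e4, e4, e4, e4]
  ring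

end CoreGeneric3

section CorePoly
open Finset PowerSeries MvPolynomial

local notation "Q6" => MvPolynomial (Fin 6) ℤ

lemma corePoly (n : ℕ) :
    (∑ k ∈ Finset.range (n + 1), (n.choose k) •
      (PowerSeries.coeff k (PowerSeries.C (R := Q6) (MvPolynomial.X 0) * PowerSeries.X * (psG (MvPolynomial.X 2) * psG (MvPolynomial.X 3))) *
       PowerSeries.coeff (n - k) (PowerSeries.C (R := Q6) (MvPolynomial.X 1) * PowerSeries.X * (psG (MvPolynomial.X 4) * psG (MvPolynomial.X 5)))))
    = PowerSeries.coeff n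
      (PowerSeries.C (R := Q6) (MvPolynomial.X 0) * PowerSeries.X * (PowerSeries.C (R := Q6) (MvPolynomial.X 1) * PowerSeries.X) *
        (2 - PowerSeries.C (R := Q6) (MvPolynomial.X 2 + MvPolynomial.X 3 + MvPolynomial.X 4 + MvPolynomial.X 5) * PowerSeries.X) *
        (psG (MvPolynomial.X 2 + MvPolynomial.X 4) * psG (MvPolynomial.X 2 + MvPolynomial.X 5) * psG (MvPolynomial.X 3 + MvPolynomial.X 4) * psG (MvPolynomial.X 3 + MvPolynomial.X 5))) := by
  have hD : ((MvPolynomial.X 2 - MvPolynomial.X 3) * (MvPolynomial.X 4 - MvPolynomial.X 5) : Q6) ≠ 0 := by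
    apply mul_ne_zero <;>
    · rw [sub_ne_zero]
      exact fun h => by simpa using MvPolynomial.X_injective h
  exact mul_left_cancel₀ hD (core_generic (MvPolynomial.X 0) (MvPolynomial.X 1) (MvPolynomial.X 2) (MvPolynomial.X 3) (MvPolynomial.X 4) (MvPolynomial.X 5) n)

end CorePoly

section CoreTransfer
open Finset PowerSeries

lemma core {A : Type*} [CommRing A] (a b u₁ u₂ v₁ v₂ : A) (n : ℕ) :
    (∑ k ∈ Finset.range (n + 1), (n.choose k) •
      (PowerSeries.coeff k (PowerSeries.C a * PowerSeries.X * (psG u₁ * psG u₂)) *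
       PowerSeries.coeff (n - k) (PowerSeries.C b * PowerSeries.X * (psG v₁ * psG v₂))))
    = PowerSeries.coeff n
      (PowerSeries.C a * PowerSeries.X * (PowerSeries.C b * PowerSeries.X) *
        (2 - PowerSeries.C (u₁ + u₂ + v₁ + v₂) * PowerSeries.X) *
        (psG (u₁ + v₁) * psG (u₁ + v₂) * psG (u₂ + v₁) * psG (u₂ + v₂))) := by
  classical
  set φ : MvPolynomial (Fin 6) ℤ →+* A :=
    (MvPolynomial.aeval ![a, b, u₁, u₂, v₁, v₂] :
      MvPolynomial (Fin 6) ℤ →ₐ[ℤ] A).toRingHom with hφdef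
  have hx0 : φ (MvPolynomial.X 0) = a := by rw [hφdef]; simp
  have hx1 : φ (MvPolynomial.X 1) = b := by rw [hφdef]; simp
  have hx2 : φ (MvPolynomial.X 2) = u₁ := by
    rw [hφdef]; show (MvPolynomial.aeval _) (MvPolynomial.X 2) = u₁
    rw [MvPolynomial.aeval_X]
    exact rfl
  have hx3 : φ (MvPolynomial.X 3) = u₂ := by
    rw [hφdef]; show (MvPolynomial.aeval _) (MvPolynomial.X 3) = u₂
    rw [MvPolynomial.aeval_X]
    exact rfl
  have hx4 : φ (MvPolynomial.X 4) = v₁ := by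
    rw [hφdef]; show (MvPolynomial.aeval _) (MvPolynomial.X 4) = v₁
    rw [MvPolynomial.aeval_X]
    exact rfl
  have hx5 : φ (MvPolynomial.X 5) = v₂ := by
    rw [hφdef]; show (MvPolynomial.aeval _) (MvPolynomial.X 5) = v₂
    rw [MvPolynomial.aeval_X]
    exact rfl
  have hG : ∀ p : MvPolynomial (Fin 6) ℤ, PowerSeries.map φ (psG p) = psG (φ p) := by
    intro p
    apply PowerSeries.ext
    intro m
    rw [PowerSeries.coeff_map, coeff_psG, coeff_psG, map_pow]
  have h2 : PowerSeries.map φ (2 : PowerSeries (MvPolynomial (Fin 6) ℤ)) = 2 := by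
    rw [map_ofNat]
  have key := congrArg φ (corePoly n)
  rw [map_sum] at key
  simp only [map_nsmul, map_mul, ← PowerSeries.coeff_map] at key
  simp only [map_mul, map_sub, map_add, PowerSeries.map_C, PowerSeries.map_X, hG, h2,
    hx0, hx1, hx2, hx3, hx4, hx5] at key
  rw [show PowerSeries.C u₁ + PowerSeries.C u₂ + PowerSeries.C v₁ + PowerSeries.C v₂
      = PowerSeries.C (u₁ + u₂ + v₁ + v₂) by rw [map_add, map_add, map_add]] at key
  exact key

end CoreTransfer


section Basic
open Finset

lemma monDeg_add (d e : σ →₀ ℕ) : monDeg (d + e) = monDeg d + monDeg e :=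
  Finsupp.sum_add_index' (fun _ => rfl) (fun _ _ _ => rfl)

lemma monDeg_zero : monDeg (0 : σ →₀ ℕ) = 0 := by simp [monDeg]

lemma eq_zero_of_monDeg_eq_zero {d : σ →₀ ℕ} (h : monDeg d = 0) : d = 0 := by
  classical
  rw [monDeg, Finsupp.sum, Finset.sum_eq_zero_iff] at h
  ext x
  by_cases hx : x ∈ d.support
  · exact h x hx
  · simpa using Finsupp.notMem_support_iff.mp hx

/-- homogeneity of degree `m` (no finiteness). -/
def Hom (m : ℕ) (f : MvPowerSeries σ ℚ) : Prop :=
  ∀ d, MvPowerSeries.coeff d f ≠ 0 → monDeg d = m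

lemma hom_zero (m : ℕ) : Hom m (0 : MvPowerSeries σ ℚ) := by
  intro d hd; simp at hd

lemma Hom.add {m : ℕ} {f g : MvPowerSeries σ ℚ} (hf : Hom m f) (hg : Hom m g) :
    Hom m (f + g) := by
  intro d hd
  rw [map_add] at hd
  by_cases h : MvPowerSeries.coeff d f ≠ 0
  · exact hf d h
  · push_neg at h; rw [h, zero_add] at hd; exact hg d hd

lemma Hom.neg {m : ℕ} {f : MvPowerSeries σ ℚ} (hf : Hom m f) : Hom m (-f) := by
  intro d hd; rw [map_neg, neg_ne_zero] at hd; exact hf d hd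

lemma Hom.sum {m : ℕ} {ι : Type*} {s : Finset ι} {F : ι → MvPowerSeries σ ℚ}
    (h : ∀ i ∈ s, Hom m (F i)) : Hom m (∑ i ∈ s, F i) := by
  classical
  induction s using Finset.induction with
  | empty => simpa using hom_zero m
  | insert _ _ hx ih =>
      rw [Finset.sum_insert hx]
      exact (h _ (Finset.mem_insert_self _ _)).add
        (ih fun i hi => h i (Finset.mem_insert_of_mem hi))

lemma Hom.mul {m n : ℕ} {f g : MvPowerSeries σ ℚ} (hf : Hom m f) (hg : Hom n g) :
    Hom (m + n) (f * g) := by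
  classical
  intro d hd
  rw [MvPowerSeries.coeff_mul] at hd
  obtain ⟨p, hp, hne⟩ := Finset.exists_ne_zero_of_sum_ne_zero hd
  rw [Finset.HasAntidiagonal.mem_antidiagonal] at hp
  have h1 : MvPowerSeries.coeff p.1 f ≠ 0 := fun h => hne (by rw [h, zero_mul])
  have h2 : MvPowerSeries.coeff p.2 g ≠ 0 := fun h => hne (by rw [h, mul_zero])
  rw [← hp, monDeg_add, hf _ h1, hg _ h2]

lemma hom_one : Hom 0 (1 : MvPowerSeries σ ℚ) := by
  classical
  intro d hd
  rw [MvPowerSeries.coeff_one] at hd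
  split at hd
  · subst ‹d = 0›; exact monDeg_zero
  · exact absurd rfl hd

lemma Hom.pow {m : ℕ} {f : MvPowerSeries σ ℚ} (hf : Hom m f) (k : ℕ) :
    Hom (m * k) (f ^ k) := by
  induction k with
  | zero => simpa using hom_one
  | succ n ih =>
      have h : m * (n + 1) = m * n + m := by ring
      rw [pow_succ, h]
      exact ih.mul hf

lemma hom_C (c : ℚ) : Hom 0 (MvPowerSeries.C (σ := σ) c) := by
  classical
  intro d hd
  rw [MvPowerSeries.coeff_C] at hd
  split at hd
  · subst ‹d = 0›; exact monDeg_zero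
  · exact absurd rfl hd

lemma hom_two : Hom 0 (2 : MvPowerSeries σ ℚ) := by
  have : (2 : MvPowerSeries σ ℚ) = MvPowerSeries.C 2 := by
    rw [map_ofNat]
  rw [this]; exact hom_C 2

end Basic

section Glue
open Finset

/-- Assemble a power series with homogeneous coefficients into an element of `Θ`. -/
noncomputable def Glue (N : ℕ) (F : PowerSeries (MvPowerSeries σ ℚ)) : MvPowerSeries σ ℚ :=
  fun d => if N ∣ monDeg d then
    MvPowerSeries.coeff d (PowerSeries.coeff (monDeg d / N) F) else 0

/-- All coefficients of `F` are homogeneous of the right degree. -/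
def HomF (N : ℕ) (F : PowerSeries (MvPowerSeries σ ℚ)) : Prop :=
  ∀ n, Hom (N * n) (PowerSeries.coeff n F)

variable {N : ℕ}

lemma hom_homComp (f : MvPowerSeries σ ℚ) (k : ℕ) : Hom (N * k) (homComp N f k) := by
  intro d hd
  rw [MvPowerSeries.coeff_apply] at hd
  unfold homComp at hd
  split at hd
  · assumption
  · exact absurd rfl hd

lemma coeff_homComp (f : MvPowerSeries σ ℚ) (k : ℕ) (d : σ →₀ ℕ) :
    MvPowerSeries.coeff d (homComp N f k) =
      if monDeg d = N * k then MvPowerSeries.coeff d f else 0 := rfl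

lemma coeff_Glue_of_eq (hN : 1 ≤ N) {F : PowerSeries (MvPowerSeries σ ℚ)} {d : σ →₀ ℕ} {n : ℕ}
    (hd : monDeg d = N * n) :
    MvPowerSeries.coeff d (Glue N F) =
      MvPowerSeries.coeff d (PowerSeries.coeff n F) := by
  rw [MvPowerSeries.coeff_apply, Glue]
  rw [if_pos (hd ▸ Dvd.intro n rfl)]
  rw [hd, Nat.mul_div_cancel_left n (by omega)]

lemma coeff_Glue_of_not {F : PowerSeries (MvPowerSeries σ ℚ)} {d : σ →₀ ℕ}
    (hd : ¬ N ∣ monDeg d) : MvPowerSeries.coeff d (Glue N F) = 0 := by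
  rw [MvPowerSeries.coeff_apply, Glue, if_neg hd]

lemma inTheta_Glue (F : PowerSeries (MvPowerSeries σ ℚ)) : InTheta N (Glue N F) :=
  fun _ hd => coeff_Glue_of_not hd

lemma homComp_Glue (hN : 1 ≤ N) {F : PowerSeries (MvPowerSeries σ ℚ)} (hF : HomF N F) (n : ℕ) :
    homComp N (Glue N F) n = PowerSeries.coeff n F := by
  apply MvPowerSeries.ext
  intro d
  rw [coeff_homComp]
  by_cases hd : monDeg d = N * n
  · rw [if_pos hd, coeff_Glue_of_eq hN hd]
  · rw [if_neg hd]
    by_contra h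
    exact hd (hF n d fun hc => h hc.symm)

lemma eq_Glue_self (hN : 1 ≤ N) {f : MvPowerSeries σ ℚ} (hf : InTheta N f) :
    f = Glue N (PowerSeries.mk fun n => homComp N f n) := by
  apply MvPowerSeries.ext
  intro d
  by_cases hd : N ∣ monDeg d
  · obtain ⟨n, hn⟩ := hd
    rw [coeff_Glue_of_eq hN hn, PowerSeries.coeff_mk, coeff_homComp, if_pos hn]
  · rw [coeff_Glue_of_not hd, hf d hd]

lemma monDeg_fst_le {p : (σ →₀ ℕ) × (σ →₀ ℕ)} {d : σ →₀ ℕ} (h : p.1 + p.2 = d) :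
    monDeg p.1 ≤ monDeg d := by
  rw [← h, monDeg_add]; omega

lemma Glue_mul (hN : 1 ≤ N) {F G : PowerSeries (MvPowerSeries σ ℚ)} (hF : HomF N F) (hG : HomF N G) :
    Glue N F * Glue N G = Glue N (F * G) := by
  classical
  apply MvPowerSeries.ext
  intro d
  rw [MvPowerSeries.coeff_mul]
  by_cases hd : N ∣ monDeg d
  · obtain ⟨n, hn⟩ := hd
    rw [coeff_Glue_of_eq hN hn, PowerSeries.coeff_mul, map_sum]
    have step : ∀ x ∈ antidiagonal n,
        MvPowerSeries.coeff d
          (PowerSeries.coeff x.1 F * PowerSeries.coeff x.2 G)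
        = ∑ p ∈ antidiagonal d,
            MvPowerSeries.coeff p.1 (PowerSeries.coeff x.1 F) *
            MvPowerSeries.coeff p.2 (PowerSeries.coeff x.2 G) :=
      fun x _ => MvPowerSeries.coeff_mul d _ _
    rw [Finset.sum_congr rfl step, Finset.sum_comm]
    apply Finset.sum_congr rfl
    intro p hp
    rw [Finset.HasAntidiagonal.mem_antidiagonal] at hp
    by_cases h1 : N ∣ monDeg p.1
    · obtain ⟨i, hi⟩ := h1
      have hle : monDeg p.1 ≤ N * n := hn ▸ monDeg_fst_le hp
      have hin : i ≤ n := Nat.le_of_mul_le_mul_left (hi ▸ hle) (by omega)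
      have hsum : monDeg p.1 + monDeg p.2 = N * n := by rw [← monDeg_add, hp, hn]
      have haux : N * (n - i) + N * i = N * n := by
        rw [← Nat.mul_add]; congr 1; omega
      have h2 : monDeg p.2 = N * (n - i) := by omega
      rw [coeff_Glue_of_eq hN hi, coeff_Glue_of_eq hN h2]
      rw [Finset.sum_eq_single (i, n - i)]
      · intro x hx hne
        rw [Finset.HasAntidiagonal.mem_antidiagonal] at hx
        have hx1 : x.1 ≠ i := by
          intro h
          apply hne
          have : x.2 = n - i := by omega
          exact Prod.ext h this
        have : MvPowerSeries.coeff p.1 (PowerSeries.coeff x.1 F) = 0 := by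
          by_contra hc
          have := hF x.1 p.1 hc
          exact hx1 (Nat.eq_of_mul_eq_mul_left (show 0 < N by omega) (show N * x.1 = N * i by omega))
        rw [this, zero_mul]
      · intro hmem
        exact absurd (Finset.HasAntidiagonal.mem_antidiagonal.mpr (by omega)) hmem
    · rw [coeff_Glue_of_not h1, zero_mul]
      symm
      apply Finset.sum_eq_zero
      intro x hx
      have : MvPowerSeries.coeff p.1 (PowerSeries.coeff x.1 F) = 0 := by
        by_contra hc
        exact h1 ⟨x.1, hF x.1 p.1 hc⟩
      rw [this, zero_mul]
  · rw [coeff_Glue_of_not hd]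
    apply Finset.sum_eq_zero
    intro p hp
    rw [Finset.HasAntidiagonal.mem_antidiagonal] at hp
    by_cases h1 : N ∣ monDeg p.1
    · have h2 : ¬ N ∣ monDeg p.2 := by
        intro h2
        exact hd (by rw [← hp, monDeg_add]; exact Nat.dvd_add h1 h2)
      rw [coeff_Glue_of_not h2, mul_zero]
    · rw [coeff_Glue_of_not h1, zero_mul]

end Glue

section Atoms
open Finset PowerSeries

variable {N : ℕ}

local notation "R" => MvPowerSeries σ ℚ
local notation "PS" => PowerSeries (MvPowerSeries σ ℚ)

lemma ps_coeff_C_mul_X (a : MvPowerSeries σ ℚ) (n : ℕ) :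
    PowerSeries.coeff n (PowerSeries.C a * PowerSeries.X) = if n = 1 then a else 0 := by
  rw [PowerSeries.coeff_C_mul, PowerSeries.coeff_X]
  split <;> simp

lemma homComp_of_hom {k : ℕ} {f : MvPowerSeries σ ℚ} (hf : Hom (N * k) f) :
    homComp N f k = f := by
  apply MvPowerSeries.ext
  intro d
  rw [coeff_homComp]
  split
  · rfl
  · by_contra h
    exact ‹¬ monDeg d = N * k› (hf d fun hc => h hc.symm)

lemma homComp_of_hom_ne {k m : ℕ} {f : MvPowerSeries σ ℚ} (hf : Hom m f) (hne : m ≠ N * k) :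
    homComp N f k = 0 := by
  apply MvPowerSeries.ext
  intro d
  rw [coeff_homComp]
  split
  · rename_i h
    rw [map_zero]
    by_contra hc
    exact hne ((hf d hc) ▸ h)
  · rw [map_zero]

lemma homComp_sub (f g : MvPowerSeries σ ℚ) (k : ℕ) :
    homComp N (f - g) k = homComp N f k - homComp N g k := by
  apply MvPowerSeries.ext
  intro d
  rw [map_sub, coeff_homComp, coeff_homComp, coeff_homComp, map_sub]
  split <;> simp

lemma inTheta_of_hom {m : ℕ} {f : MvPowerSeries σ ℚ} (hf : Hom m f) (hm : N ∣ m) :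
    InTheta N f := by
  intro d hd
  by_contra hc
  exact hd ((hf d hc) ▸ hm)

lemma InTheta.sub {f g : MvPowerSeries σ ℚ} (hf : InTheta N f) (hg : InTheta N g) :
    InTheta N (f - g) := by
  intro d hd
  rw [map_sub, hf d hd, hg d hd, sub_zero]

lemma eq_Glue_of (hN : 1 ≤ N) {f : MvPowerSeries σ ℚ} {F : PS} (hf : InTheta N f)
    (h : ∀ n, homComp N f n = PowerSeries.coeff n F) : f = Glue N F := by
  rw [eq_Glue_self hN hf]
  exact congrArg (Glue N)
    (PowerSeries.ext fun n => by rw [PowerSeries.coeff_mk, h n])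

lemma two_eq_C : (2 : MvPowerSeries σ ℚ) = MvPowerSeries.C 2 := by rw [map_ofNat]

lemma ps_two_eq_C : (2 : PS) = PowerSeries.C (2 : MvPowerSeries σ ℚ) :=
  (map_ofNat (PowerSeries.C : MvPowerSeries σ ℚ →+* PS) 2).symm

lemma N_ne_mul {n : ℕ} (hN : 1 ≤ N) (h : n ≠ 1) : N ≠ N * n := by
  match n, h with
  | 0, _ => rw [mul_zero]; omega
  | (m+2), _ =>
      have : N * 2 ≤ N * (m + 2) := Nat.mul_le_mul_left N (by omega)
      omega

lemma zero_ne_N_mul {n : ℕ} (hN : 1 ≤ N) (h : n ≠ 0) : 0 ≠ N * n := by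
  have : N * 1 ≤ N * n := Nat.mul_le_mul_left N (by omega)
  omega

/-- homogeneous `a` as a glue. -/
lemma Glue_homog (hN : 1 ≤ N) {a : MvPowerSeries σ ℚ} (ha : Hom N a) :
    a = Glue N (PowerSeries.C a * PowerSeries.X) := by
  apply eq_Glue_of hN (inTheta_of_hom ha ⟨1, (mul_one N).symm⟩)
  intro n
  rw [ps_coeff_C_mul_X]
  by_cases h : n = 1
  · subst h
    rw [if_pos rfl]
    exact homComp_of_hom (by rwa [mul_one])
  · rw [if_neg h]
    exact homComp_of_hom_ne ha (N_ne_mul hN h)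

lemma Glue_two_sub (hN : 1 ≤ N) {s : MvPowerSeries σ ℚ} (hs : Hom N s) :
    (2 : MvPowerSeries σ ℚ) - s = Glue N (2 - PowerSeries.C s * PowerSeries.X) := by
  apply eq_Glue_of hN (InTheta.sub (inTheta_of_hom hom_two ⟨0, rfl⟩)
    (inTheta_of_hom hs ⟨1, (mul_one N).symm⟩))
  intro n
  rw [map_sub, homComp_sub, ps_coeff_C_mul_X, ps_two_eq_C, PowerSeries.coeff_C]
  match n with
  | 0 =>
      have e1 : homComp N (2 : MvPowerSeries σ ℚ) 0 = 2 :=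
        homComp_of_hom (by rw [mul_zero]; exact hom_two)
      have e2 : homComp N s 0 = 0 := homComp_of_hom_ne hs (by rw [mul_zero]; omega)
      rw [e1, e2]
      simp
  | 1 =>
      have e1 : homComp N (2 : MvPowerSeries σ ℚ) 1 = 0 :=
        homComp_of_hom_ne hom_two (zero_ne_N_mul hN one_ne_zero)
      have e2 : homComp N s 1 = s := homComp_of_hom (by rwa [mul_one])
      rw [e1, e2]
      simp
  | (m+2) =>
      have e1 : homComp N (2 : MvPowerSeries σ ℚ) (m+2) = 0 :=
        homComp_of_hom_ne hom_two (zero_ne_N_mul hN (by omega))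
      have e2 : homComp N s (m+2) = 0 := homComp_of_hom_ne hs (N_ne_mul hN (by omega))
      rw [e1, e2]
      simp

lemma Glue_one_sub (hN : 1 ≤ N) {s : MvPowerSeries σ ℚ} (hs : Hom N s) :
    (1 : MvPowerSeries σ ℚ) - s = Glue N (1 - PowerSeries.C s * PowerSeries.X) := by
  apply eq_Glue_of hN (InTheta.sub (inTheta_of_hom hom_one ⟨0, rfl⟩)
    (inTheta_of_hom hs ⟨1, (mul_one N).symm⟩))
  intro n
  rw [map_sub, homComp_sub, ps_coeff_C_mul_X, PowerSeries.coeff_one]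
  match n with
  | 0 =>
      have e1 : homComp N (1 : MvPowerSeries σ ℚ) 0 = 1 :=
        homComp_of_hom (by rw [mul_zero]; exact hom_one)
      have e2 : homComp N s 0 = 0 := homComp_of_hom_ne hs (by rw [mul_zero]; omega)
      rw [e1, e2]
      simp
  | 1 =>
      have e1 : homComp N (1 : MvPowerSeries σ ℚ) 1 = 0 :=
        homComp_of_hom_ne hom_one (zero_ne_N_mul hN one_ne_zero)
      have e2 : homComp N s 1 = s := homComp_of_hom (by rwa [mul_one])
      rw [e1, e2]
      simp
  | (m+2) =>
      have e1 : homComp N (1 : MvPowerSeries σ ℚ) (m+2) = 0 :=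
        homComp_of_hom_ne hom_one (zero_ne_N_mul hN (by omega))
      have e2 : homComp N s (m+2) = 0 := homComp_of_hom_ne hs (N_ne_mul hN (by omega))
      rw [e1, e2]
      simp

end Atoms

section HomFStuff
open Finset

variable {N : ℕ}

local notation "R" => MvPowerSeries σ ℚ
local notation "PS" => PowerSeries (MvPowerSeries σ ℚ)

lemma Hom.of_eq {m m' : ℕ} {f : MvPowerSeries σ ℚ} (h : Hom m f) (e : m = m') : Hom m' f :=
  e ▸ h

lemma homF_mul {F G : PS} (hF : HomF N F) (hG : HomF N G) : HomF N (F * G) := by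
  intro n
  rw [PowerSeries.coeff_mul]
  apply Hom.sum
  intro p hp
  rw [Finset.HasAntidiagonal.mem_antidiagonal] at hp
  exact ((hF p.1).mul (hG p.2)).of_eq (by rw [← Nat.mul_add, hp])

lemma homF_geom {u : MvPowerSeries σ ℚ} (hu : Hom N u) :
    HomF N (psG u) := by
  intro n
  rw [coeff_psG]
  exact hu.pow n

lemma homF_CX {a : MvPowerSeries σ ℚ} (ha : Hom N a) :
    HomF N (PowerSeries.C a * PowerSeries.X) := by
  intro n
  rw [ps_coeff_C_mul_X]
  split
  · rename_i h
    subst h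
    exact ha.of_eq (mul_one N).symm
  · exact hom_zero _

lemma homF_one : HomF N (1 : PS) := by
  intro n
  rw [PowerSeries.coeff_one]
  split
  · rename_i h
    subst h
    exact hom_one.of_eq (mul_zero N).symm
  · exact hom_zero _

lemma homF_sub {F G : PS} (hF : HomF N F) (hG : HomF N G) : HomF N (F - G) := by
  intro n
  rw [map_sub, sub_eq_add_neg]
  exact (hF n).add (hG n).neg

lemma homF_two : HomF N (2 : PS) := by
  intro n
  rw [ps_two_eq_C, PowerSeries.coeff_C]
  split
  · rename_i h
    subst h
    exact hom_two.of_eq (mul_zero N).symm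
  · exact hom_zero _

lemma const_one_sub (hN : 1 ≤ N) {u : MvPowerSeries σ ℚ} (hu : Hom N u) :
    MvPowerSeries.constantCoeff (1 - u) ≠ 0 := by
  have hu0 : MvPowerSeries.coeff 0 u = 0 := by
    by_contra h
    have := hu 0 h
    rw [monDeg_zero] at this
    omega
  rw [MvPowerSeries.coeff_zero_eq_constantCoeff] at hu0
  rw [map_sub, map_one, hu0, sub_zero]
  exact one_ne_zero

lemma Glue_one (hN : 1 ≤ N) : (1 : MvPowerSeries σ ℚ) = Glue N 1 := by
  apply eq_Glue_of hN (inTheta_of_hom hom_one ⟨0, rfl⟩)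
  intro n
  rw [PowerSeries.coeff_one]
  split
  · rename_i h
    subst h
    exact homComp_of_hom (hom_one.of_eq (mul_zero N).symm)
  · exact homComp_of_hom_ne hom_one (zero_ne_N_mul hN (by assumption))

lemma Glue_inv_one_sub (hN : 1 ≤ N) {u : MvPowerSeries σ ℚ} (hu : Hom N u) :
    (1 - u)⁻¹ = Glue N (psG u) := by
  rw [MvPowerSeries.inv_eq_iff_mul_eq_one (const_one_sub hN hu)]
  conv_lhs => rw [Glue_one_sub hN hu]
  rw [Glue_mul hN (homF_geom hu) (homF_sub homF_one (homF_CX hu))]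
  rw [psG_mul, ← Glue_one hN]

lemma odot_eq_Glue (hN : 1 ≤ N) (f g : MvPowerSeries σ ℚ) :
    odot N f g = Glue N (PowerSeries.mk fun n =>
      ∑ k ∈ Finset.range (n + 1), (n.choose k) • (homComp N f k * homComp N g (n - k))) := by
  classical
  apply MvPowerSeries.ext
  intro d
  have hL : MvPowerSeries.coeff d (odot N f g)
      = ∑ k ∈ Finset.range (monDeg d + 1), ∑ l ∈ Finset.range (monDeg d + 1),
        ((k + l).choose k : ℚ) * MvPowerSeries.coeff d (homComp N f k * homComp N g l) := rfl
  rw [hL]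
  by_cases hd : N ∣ monDeg d
  · obtain ⟨n, hn⟩ := hd
    rw [coeff_Glue_of_eq hN hn, PowerSeries.coeff_mk, map_sum]
    have hnle : n ≤ monDeg d := by
      rw [hn]; exact Nat.le_mul_of_pos_left n (by omega)
    have hzero : ∀ k l : ℕ, k + l ≠ n →
        MvPowerSeries.coeff d (homComp N f k * homComp N g l) = 0 := by
      intro k l hkl
      by_contra hc
      have h2 := ((hom_homComp (N := N) f k).mul (hom_homComp (N := N) g l)) d hc
      rw [← Nat.mul_add, hn] at h2
      exact hkl (Nat.eq_of_mul_eq_mul_left (show 0 < N by omega) h2.symm)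
    have key : ∀ k ∈ Finset.range (monDeg d + 1),
        (∑ l ∈ Finset.range (monDeg d + 1),
          ((k + l).choose k : ℚ) * MvPowerSeries.coeff d (homComp N f k * homComp N g l))
        = if k ≤ n then
            (n.choose k : ℚ) * MvPowerSeries.coeff d (homComp N f k * homComp N g (n - k))
          else 0 := by
      intro k _
      by_cases hk : k ≤ n
      · rw [if_pos hk]
        rw [Finset.sum_eq_single (n - k)]
        · rw [Nat.add_sub_cancel' hk]
        · intro l _ hne
          rw [hzero k l (by omega), mul_zero]
        · intro hmem
          exact absurd (Finset.mem_range.mpr (by omega)) hmem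
      · rw [if_neg hk]
        apply Finset.sum_eq_zero
        intro l _
        rw [hzero k l (by omega), mul_zero]
    rw [Finset.sum_congr rfl key]
    have hsub : Finset.range (n + 1) ⊆ Finset.range (monDeg d + 1) :=
      Finset.range_subset_range.mpr (by omega)
    have hout : ∀ k ∈ Finset.range (monDeg d + 1), k ∉ Finset.range (n + 1) →
        (if k ≤ n then
          (n.choose k : ℚ) * MvPowerSeries.coeff d (homComp N f k * homComp N g (n - k))
        else 0) = 0 := by
      intro k _ hk2
      rw [Finset.mem_range] at hk2
      rw [if_neg (by omega)]
    rw [← Finset.sum_subset hsub hout]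
    apply Finset.sum_congr rfl
    intro k hk
    rw [Finset.mem_range] at hk
    rw [if_pos (by omega : k ≤ n), map_nsmul, nsmul_eq_mul]
  · rw [coeff_Glue_of_not hd]
    apply Finset.sum_eq_zero
    intro k _
    apply Finset.sum_eq_zero
    intro l _
    have : MvPowerSeries.coeff d (homComp N f k * homComp N g l) = 0 := by
      by_contra hc
      have h2 := ((hom_homComp (N := N) f k).mul (hom_homComp (N := N) g l)) d hc
      rw [← Nat.mul_add] at h2
      exact hd (h2 ▸ ⟨k + l, rfl⟩)
    rw [this, mul_zero]


/-- example `P^{1,1}_{2,2}`: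
`(a (1-u₁)⁻¹(1-u₂)⁻¹) ⊙ (b (1-v₁)⁻¹(1-v₂)⁻¹)
  = a b (2 - u₁ - u₂ - v₁ - v₂) ∏_{i,j} (1-u_i-v_j)⁻¹`. -/
theorem odot_example_P11_22 {σ : Type*} (N : ℕ) (hN : 1 ≤ N)
    (a b u₁ u₂ v₁ v₂ : MvPowerSeries σ ℚ)
    (ha : IsHomogDeg N a) (hb : IsHomogDeg N b)
    (hu₁ : IsHomogDeg N u₁) (hu₂ : IsHomogDeg N u₂)
    (hv₁ : IsHomogDeg N v₁) (hv₂ : IsHomogDeg N v₂)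
    (hdist : [u₁ + v₁, u₁ + v₂, u₂ + v₁, u₂ + v₂].Pairwise (· ≠ ·)) :
    odot N (a * ((1 - u₁)⁻¹ * (1 - u₂)⁻¹)) (b * ((1 - v₁)⁻¹ * (1 - v₂)⁻¹)) =
      a * b * (2 - u₁ - u₂ - v₁ - v₂) *
        ((1 - u₁ - v₁)⁻¹ * (1 - u₁ - v₂)⁻¹ * (1 - u₂ - v₁)⁻¹ * (1 - u₂ - v₂)⁻¹) := by
  classical
  have hA : Hom N a := ha.2
  have hB : Hom N b := hb.2
  have hU₁ : Hom N u₁ := hu₁.2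
  have hU₂ : Hom N u₂ := hu₂.2
  have hV₁ : Hom N v₁ := hv₁.2
  have hV₂ : Hom N v₂ := hv₂.2
  have hW11 : Hom N (u₁ + v₁) := hU₁.add hV₁
  have hW12 : Hom N (u₁ + v₂) := hU₁.add hV₂
  have hW21 : Hom N (u₂ + v₁) := hU₂.add hV₁
  have hW22 : Hom N (u₂ + v₂) := hU₂.add hV₂
  have hS : Hom N (u₁ + u₂ + v₁ + v₂) := ((hU₁.add hU₂).add hV₁).add hV₂
  rw [show ((2 : MvPowerSeries σ ℚ) - u₁ - u₂ - v₁ - v₂)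
      = 2 - (u₁ + u₂ + v₁ + v₂) by ring]
  rw [show ((1 : MvPowerSeries σ ℚ) - u₁ - v₁) = 1 - (u₁ + v₁) by ring]
  rw [show ((1 : MvPowerSeries σ ℚ) - u₁ - v₂) = 1 - (u₁ + v₂) by ring]
  rw [show ((1 : MvPowerSeries σ ℚ) - u₂ - v₁) = 1 - (u₂ + v₁) by ring]
  rw [show ((1 : MvPowerSeries σ ℚ) - u₂ - v₂) = 1 - (u₂ + v₂) by ring]
  rw [Glue_inv_one_sub hN hU₁, Glue_inv_one_sub hN hU₂,
    Glue_inv_one_sub hN hV₁, Glue_inv_one_sub hN hV₂,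
    Glue_inv_one_sub hN hW11, Glue_inv_one_sub hN hW12,
    Glue_inv_one_sub hN hW21, Glue_inv_one_sub hN hW22,
    Glue_two_sub hN hS]
  rw [Glue_homog hN hA, Glue_homog hN hB]
  have hFa : HomF N (PowerSeries.C a * PowerSeries.X) := homF_CX hA
  have hFb : HomF N (PowerSeries.C b * PowerSeries.X) := homF_CX hB
  have hG1 : HomF N (psG u₁) := homF_geom hU₁
  have hG2 : HomF N (psG u₂) := homF_geom hU₂
  have hG3 : HomF N (psG v₁) := homF_geom hV₁
  have hG4 : HomF N (psG v₂) := homF_geom hV₂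
  have hG11 : HomF N (psG (u₁ + v₁)) := homF_geom hW11
  have hG12 : HomF N (psG (u₁ + v₂)) := homF_geom hW12
  have hG21 : HomF N (psG (u₂ + v₁)) := homF_geom hW21
  have hG22 : HomF N (psG (u₂ + v₂)) := homF_geom hW22
  have hF2S : HomF N (2 - PowerSeries.C (u₁ + u₂ + v₁ + v₂) * PowerSeries.X) :=
    homF_sub homF_two (homF_CX hS)
  rw [Glue_mul hN hG1 hG2, Glue_mul hN hFa (homF_mul hG1 hG2),
    Glue_mul hN hG3 hG4, Glue_mul hN hFb (homF_mul hG3 hG4)]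
  rw [Glue_mul hN hFa hFb, Glue_mul hN (homF_mul hFa hFb) hF2S,
    Glue_mul hN hG11 hG12, Glue_mul hN (homF_mul hG11 hG12) hG21,
    Glue_mul hN (homF_mul (homF_mul hG11 hG12) hG21) hG22,
    Glue_mul hN (homF_mul (homF_mul hFa hFb) hF2S)
      (homF_mul (homF_mul (homF_mul hG11 hG12) hG21) hG22)]
  rw [odot_eq_Glue hN]
  have hFA : HomF N (PowerSeries.C a * PowerSeries.X * (psG u₁ * psG u₂)) :=
    homF_mul hFa (homF_mul hG1 hG2)
  have hFB : HomF N (PowerSeries.C b * PowerSeries.X * (psG v₁ * psG v₂)) :=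
    homF_mul hFb (homF_mul hG3 hG4)
  simp only [homComp_Glue hN hFA, homComp_Glue hN hFB]
  apply congrArg (Glue N)
  apply PowerSeries.ext
  intro n
  rw [PowerSeries.coeff_mk]
  exact core a b u₁ u₂ v₁ v₂ n
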